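/- Obstruction at n = 4: the number of σ in V_4 with τ_4(σ) = 1 is 3, the number with τ_4(σ) = 2 is 4, and the number with τ_4(σ) = 3 is 0; in particular, these counts do not equal the Katugampola coefficients (3, 12, 4) for row n = 4. -/

import Mathlib

inductive RB : Type
  | R : RB
  | B : RB
deriving DecidableEq

/-- σ contains at least one B. -/
def hasB {n : ℕ} (σ : Fin n → RB) : Prop := ∃ i, σ i = RB.B

/-- The set of (0-based) positions where σ takes value B. -/
def Bpos {n : ℕ} (σ : Fin n → RB) : Set ℕ := {i | ∃ h : i < n, σ ⟨i, h⟩ = RB.B}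

noncomputable def firstB {n : ℕ} (σ : Fin n → RB) : ℕ := sInf (Bpos σ)

noncomputable def lastB {n : ℕ} (σ : Fin n → RB) : ℕ := sSup (Bpos σ)

noncomputable def gap {n : ℕ} (σ : Fin n → RB) : ℕ := lastB σ - firstB σ

/-- σ is valid: contains at least one B and gap ≤ 1. -/
def valid {n : ℕ} (σ : Fin n → RB) : Prop := hasB σ ∧ gap σ ≤ 1

/-- Parity-dependent type function. -/
noncomputable def tau {n : ℕ} (σ : Fin n → RB) : ℕ :=
  if Even n then 2 - gap σ else gap σ + 1

-- auxiliaries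
instance : Fintype RB :=
  ⟨{RB.R, RB.B}, by intro x; cases x <;> simp⟩

def Bfin {n : ℕ} (σ : Fin n → RB) : Finset ℕ :=
  (Finset.univ.filter (fun i : Fin n => σ i = RB.B)).image Fin.val

lemma Bpos_eq {n : ℕ} (σ : Fin n → RB) : Bpos σ = ↑(Bfin σ) := by
  ext i
  simp only [Bpos, Bfin, Set.mem_setOf_eq, Finset.coe_image, Finset.coe_filter,
    Finset.mem_univ, true_and, Set.mem_image, Set.mem_setOf_eq]
  constructor
  · rintro ⟨h, hb⟩; exact ⟨⟨i, h⟩, hb, rfl⟩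
  · rintro ⟨j, hb, rfl⟩; exact ⟨j.isLt, by simpa using hb⟩

lemma hasB_iff {n : ℕ} (σ : Fin n → RB) : hasB σ ↔ (Bfin σ).Nonempty := by
  simp [hasB, Bfin, Finset.Nonempty]

def gapc {n : ℕ} (σ : Fin n → RB) : ℕ :=
  ((Bfin σ).max.getD 0) - ((Bfin σ).min.getD 0)

lemma gap_eq {n : ℕ} (σ : Fin n → RB) (h : hasB σ) : gap σ = gapc σ := by
  have hne : (Bfin σ).Nonempty := (hasB_iff σ).1 h
  have hmax : sSup (Bpos σ) = (Bfin σ).max' hne := by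
    rw [Bpos_eq]; exact hne.csSup_eq_max'
  have hmin : sInf (Bpos σ) = (Bfin σ).min' hne := by
    rw [Bpos_eq]; exact hne.csInf_eq_min'
  unfold gap lastB firstB gapc
  rw [hmax, hmin, ← Finset.coe_max' hne, ← Finset.coe_min' hne]
  rfl

def validc {n : ℕ} (σ : Fin n → RB) : Prop := (Bfin σ).Nonempty ∧ gapc σ ≤ 1

def tauc {n : ℕ} (σ : Fin n → RB) : ℕ := if Even n then 2 - gapc σ else gapc σ + 1

instance {n : ℕ} : DecidablePred (validc (n := n)) := fun _ => by
  unfold validc; infer_instance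

lemma key {n : ℕ} (σ : Fin n → RB) (k : ℕ) :
    (valid σ ∧ tau σ = k) ↔ (validc σ ∧ tauc σ = k) := by
  constructor
  · rintro ⟨⟨h1, h2⟩, h3⟩
    rw [gap_eq σ h1] at h2
    refine ⟨⟨(hasB_iff σ).1 h1, h2⟩, ?_⟩
    rw [← h3]; unfold tau tauc; rw [gap_eq σ h1]
  · rintro ⟨⟨h1, h2⟩, h3⟩
    have hb : hasB σ := (hasB_iff σ).2 h1
    refine ⟨⟨hb, by rw [gap_eq σ hb]; exact h2⟩, ?_⟩
    rw [← h3]; unfold tau tauc; rw [gap_eq σ hb]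

instance dec4 (k : ℕ) : DecidablePred (fun σ : Fin 4 → RB => validc σ ∧ tauc σ = k) :=
  fun _ => by unfold validc tauc; infer_instance

lemma card_eq (k : ℕ) :
    Nat.card {σ : Fin 4 → RB // valid σ ∧ tau σ = k}
      = Fintype.card {σ : Fin 4 → RB // validc σ ∧ tauc σ = k} := by
  rw [Nat.card_eq_of_bijective (Equiv.subtypeEquivRight (fun σ => key σ k))
    (Equiv.bijective _), Nat.card_eq_fintype_card]

theorem stmt13 :
    Nat.card {σ : Fin 4 → RB // valid σ ∧ tau σ = 1} = 3 ∧
    Nat.card {σ : Fin 4 → RB // valid σ ∧ tau σ = 2} = 4 ∧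
    Nat.card {σ : Fin 4 → RB // valid σ ∧ tau σ = 3} = 0 ∧
    (Nat.card {σ : Fin 4 → RB // valid σ ∧ tau σ = 1},
     Nat.card {σ : Fin 4 → RB // valid σ ∧ tau σ = 2},
     Nat.card {σ : Fin 4 → RB // valid σ ∧ tau σ = 3}) ≠ (3, 12, 4) := by
  have h1 : Nat.card {σ : Fin 4 → RB // valid σ ∧ tau σ = 1} = 3 := by
    rw [card_eq]; decide
  have h2 : Nat.card {σ : Fin 4 → RB // valid σ ∧ tau σ = 2} = 4 := by
    rw [card_eq]; decide
  have h3 : Nat.card {σ : Fin 4 → RB // valid σ ∧ tau σ = 3} = 0 := by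
    rw [card_eq]; decide
  exact ⟨h1, h2, h3, by simp [h1, h2, h3]⟩
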